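/- Let A be a locally C*-algebra with topology generated by an upward directed family of C*-seminorms {p_λ}. Then the set b(A) = {a ∈ A : sup_λ p_λ(a) < ∞} of bounded elements, equipped with the norm ‖a‖_∞ = sup_λ p_λ(a), is a C*-algebra. -/

import Mathlib

/-- In a locally C*-algebra `A` (a complete Hausdorff topological
*-algebra whose topology is given by an upward directed family of C*-seminorms
`p l`), the set `b(A)` of bounded elements, with the norm `‖a‖∞ = ⨆ l, p l a`,
is a C*-algebra: it is a *-subalgebra, `‖·‖∞` is a (submultiplicative,
star-invariant) norm satisfying the C*-identity, and `b(A)` is complete for it. -/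
theorem stmt1 {A : Type*} [Ring A] [Algebra ℂ A] [StarRing A] [StarModule ℂ A]
    [UniformSpace A] [IsUniformAddGroup A] [CompleteSpace A] [T2Space A]
    {Λ : Type*} [Nonempty Λ]
    (p : SeminormFamily ℂ A Λ)
    (htop : WithSeminorms p)
    (hdir : ∀ l1 l2 : Λ, ∃ l3 : Λ, (∀ a, p l1 a ≤ p l3 a) ∧ ∀ a, p l2 a ≤ p l3 a)
    (hmul : ∀ (l : Λ) (a b : A), p l (a * b) ≤ p l a * p l b)
    (hstar : ∀ (l : Λ) (a : A), p l (star a) = p l a)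
    (hCstar : ∀ (l : Λ) (a : A), p l (star a * a) = p l a ^ 2) :
    -- b(A) and its norm
    ∀ bA : Set A, bA = {a : A | BddAbove (Set.range fun l : Λ => p l a)} →
    ∀ N : A → ℝ, (∀ a, N a = ⨆ l : Λ, p l a) →
    -- b(A) is a *-subalgebra
    ((1 : A) ∈ bA) ∧
    (∀ a ∈ bA, ∀ b ∈ bA, a + b ∈ bA ∧ a * b ∈ bA) ∧
    (∀ a ∈ bA, star a ∈ bA ∧ ∀ z : ℂ, z • a ∈ bA) ∧
    -- ‖·‖∞ is a norm on b(A)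
    (∀ a ∈ bA, ∀ b ∈ bA, N (a + b) ≤ N a + N b) ∧
    (∀ a ∈ bA, ∀ z : ℂ, N (z • a) = ‖z‖ * N a) ∧
    (∀ a ∈ bA, 0 ≤ N a) ∧
    (∀ a ∈ bA, N a = 0 → a = 0) ∧
    -- submultiplicative, star-invariant, C*-identity
    (∀ a ∈ bA, ∀ b ∈ bA, N (a * b) ≤ N a * N b) ∧
    (∀ a ∈ bA, N (star a) = N a) ∧
    (∀ a ∈ bA, N (star a * a) = N a ^ 2) ∧
    -- completeness of b(A) with respect to ‖·‖∞
    (∀ u : ℕ → A, (∀ n, u n ∈ bA) →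
      (∀ ε : ℝ, 0 < ε → ∃ n₀, ∀ m ≥ n₀, ∀ n ≥ n₀, N (u m - u n) < ε) →
      ∃ a ∈ bA, ∀ ε : ℝ, 0 < ε → ∃ n₀, ∀ n ≥ n₀, N (u n - a) < ε) := by
  intro bA hbA N hN
  have hmem : ∀ a : A, a ∈ bA ↔ BddAbove (Set.range fun l : Λ => p l a) := by
    intro a; rw [hbA]; exact Iff.rfl
  have hple : ∀ a : A, a ∈ bA → ∀ l, p l a ≤ N a := by
    intro a ha l
    rw [hN]
    exact le_ciSup ((hmem a).1 ha) l
  have hN0 : ∀ a : A, a ∈ bA → 0 ≤ N a := by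
    intro a ha
    exact le_trans (apply_nonneg (p (Classical.arbitrary Λ)) a)
      (hple a ha (Classical.arbitrary Λ))
  have hNle : ∀ (a : A) (c : ℝ), (∀ l, p l a ≤ c) → N a ≤ c := by
    intro a c h; rw [hN]; exact ciSup_le h
  have hbdd : ∀ (a : A) (c : ℝ), (∀ l, p l a ≤ c) → a ∈ bA := by
    intro a c h
    rw [hmem]
    exact ⟨c, by rintro x ⟨l, rfl⟩; exact h l⟩
  -- membership lemmas
  have hone : (1 : A) ∈ bA := by
    refine hbdd 1 1 fun l => ?_
    have h := hCstar l 1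
    rw [star_one, one_mul] at h
    nlinarith [apply_nonneg (p l) (1 : A), sq_nonneg (p l (1 : A) - 1)]
  have hadd_mem : ∀ a ∈ bA, ∀ b ∈ bA, a + b ∈ bA := by
    intro a ha b hb
    exact hbdd _ (N a + N b) fun l =>
      (map_add_le_add (p l) a b).trans (add_le_add (hple a ha l) (hple b hb l))
  have hmul_mem : ∀ a ∈ bA, ∀ b ∈ bA, a * b ∈ bA := by
    intro a ha b hb
    exact hbdd _ (N a * N b) fun l =>
      (hmul l a b).trans (mul_le_mul (hple a ha l) (hple b hb l)
        (apply_nonneg _ _) (hN0 a ha))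
  have hstar_mem : ∀ a ∈ bA, star a ∈ bA := by
    intro a ha
    exact hbdd _ (N a) fun l => (hstar l a).le.trans (hple a ha l)
  have hsmul_mem : ∀ a ∈ bA, ∀ z : ℂ, z • a ∈ bA := by
    intro a ha z
    refine hbdd _ (‖z‖ * N a) fun l => ?_
    rw [map_smul_eq_mul]
    exact mul_le_mul_of_nonneg_left (hple a ha l) (norm_nonneg z)
  have hsub_mem : ∀ a ∈ bA, ∀ b ∈ bA, a - b ∈ bA := by
    intro a ha b hb
    have : a - b = a + (-1 : ℂ) • b := by rw [neg_one_smul, sub_eq_add_neg]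
    rw [this]
    exact hadd_mem a ha _ (hsmul_mem b hb (-1))
  refine ⟨hone, fun a ha b hb => ⟨hadd_mem a ha b hb, hmul_mem a ha b hb⟩,
    fun a ha => ⟨hstar_mem a ha, hsmul_mem a ha⟩, ?_, ?_, hN0, ?_, ?_, ?_, ?_, ?_⟩
  · -- triangle inequality
    intro a ha b hb
    exact hNle _ _ fun l =>
      (map_add_le_add (p l) a b).trans (add_le_add (hple a ha l) (hple b hb l))
  · -- homogeneity
    intro a _ z
    rw [hN, hN, Real.mul_iSup_of_nonneg (norm_nonneg z)]
    exact iSup_congr fun l => map_smul_eq_mul (p l) z a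
  · -- definiteness
    intro a ha h0
    by_contra hne
    obtain ⟨i, hi⟩ := htop.separating_of_T1 a hne
    exact hi (le_antisymm (h0 ▸ hple a ha i) (apply_nonneg _ _))
  · -- submultiplicativity
    intro a ha b hb
    exact hNle _ _ fun l =>
      (hmul l a b).trans (mul_le_mul (hple a ha l) (hple b hb l)
        (apply_nonneg _ _) (hN0 a ha))
  · -- star invariance
    intro a _
    rw [hN, hN]
    exact iSup_congr fun l => hstar l a
  · -- C*-identity
    intro a ha
    have hsa : star a * a ∈ bA := hmul_mem _ (hstar_mem a ha) a ha
    have hX0 : 0 ≤ N (star a * a) := hN0 _ hsa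
    refine le_antisymm ?_ ?_
    · refine hNle _ _ fun l => ?_
      rw [hCstar l a]
      exact pow_le_pow_left₀ (apply_nonneg _ _) (hple a ha l) 2
    · have h1 : N a ≤ Real.sqrt (N (star a * a)) := by
        refine hNle _ _ fun l => ?_
        have : p l a ^ 2 ≤ N (star a * a) := by
          rw [← hCstar l a]; exact hple _ hsa l
        calc p l a = Real.sqrt (p l a ^ 2) :=
              (Real.sqrt_sq (apply_nonneg _ _)).symm
          _ ≤ Real.sqrt (N (star a * a)) := Real.sqrt_le_sqrt this
      calc N a ^ 2 ≤ Real.sqrt (N (star a * a)) ^ 2 :=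
            pow_le_pow_left₀ (hN0 a ha) h1 2
        _ = N (star a * a) := Real.sq_sqrt hX0
  · -- completeness
    intro u hu hcau
    have hC : CauchySeq u := by
      rw [cauchySeq_iff_tendsto, uniformity_eq_comap_nhds_zero A, Filter.tendsto_comap_iff]
      rw [htop.tendsto_nhds]
      intro i ε hε
      obtain ⟨n₀, hn₀⟩ := hcau ε hε
      rw [Filter.eventually_atTop]
      refine ⟨(n₀, n₀), fun q hq => ?_⟩
      have h1 : p i (u q.2 - u q.1) ≤ N (u q.2 - u q.1) :=
        hple _ (hsub_mem _ (hu q.2) _ (hu q.1)) i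
      have h2 : N (u q.2 - u q.1) < ε := hn₀ q.2 hq.2 q.1 hq.1
      simpa using h1.trans_lt h2
    obtain ⟨a, ha⟩ := cauchySeq_tendsto_of_complete hC
    have hkey : ∀ ε : ℝ, 0 < ε → ∃ n₀, ∀ n ≥ n₀, ∀ l, p l (u n - a) ≤ ε := by
      intro ε hε
      obtain ⟨n₀, hn₀⟩ := hcau ε hε
      refine ⟨n₀, fun n hn l => ?_⟩
      have h1 : Filter.Tendsto (fun m => p l (u n - u m)) Filter.atTop
          (nhds (p l (u n - a))) :=
        ((htop.continuous_seminorm l).tendsto _).comp (Filter.Tendsto.const_sub _ ha)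
      refine le_of_tendsto h1 ?_
      filter_upwards [Filter.eventually_ge_atTop n₀] with m hm
      exact (hple _ (hsub_mem _ (hu n) _ (hu m)) l).trans (hn₀ n hn m hm).le
    obtain ⟨n₁, hn₁⟩ := hkey 1 one_pos
    have haA : a ∈ bA := by
      refine hbdd a (N (u n₁) + 1) fun l => ?_
      calc p l a = p l ((a - u n₁) + u n₁) := by rw [sub_add_cancel]
        _ ≤ p l (a - u n₁) + p l (u n₁) := map_add_le_add _ _ _
        _ = p l (u n₁ - a) + p l (u n₁) := by
            rw [← map_neg_eq_map (p l), neg_sub]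
        _ ≤ 1 + N (u n₁) := add_le_add (hn₁ n₁ le_rfl l) (hple _ (hu n₁) l)
        _ = N (u n₁) + 1 := add_comm _ _
    refine ⟨a, haA, fun ε hε => ?_⟩
    obtain ⟨n₀, hn₀⟩ := hkey (ε / 2) (half_pos hε)
    refine ⟨n₀, fun n hn => ?_⟩
    have : N (u n - a) ≤ ε / 2 := hNle _ _ (hn₀ n hn)
    linarith
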